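/- Let k be a field, let A be a commutative Artinian local k-algebra with maximal ideal m, let R be a commutative k-algebra, and set B = R ⊗_k A. If s ∈ B is such that its image under the canonical surjection B → B/mB is a nonzerodivisor in B/mB, then s is a nonzerodivisor in B (i.e., multiplication by s on B is injective). -/

import Mathlib

open TensorProduct

lemma aux_mem_smul_top_iff {A : Type*} [CommRing A] (I : Ideal A) {ι : Type*}
    (x : ι →₀ A) : x ∈ (I • ⊤ : Submodule A (ι →₀ A)) ↔ ∀ i, x i ∈ I := by
  constructor
  · intro hx i
    refine Submodule.smul_induction_on hx (fun a ha z _ => ?_) (fun y z hy hz => ?_)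
    · rw [Finsupp.smul_apply, smul_eq_mul]
      exact I.mul_mem_right _ ha
    · rw [Finsupp.add_apply]; exact I.add_mem hy hz
  · intro hx
    rw [← Finsupp.sum_single x]
    refine Submodule.sum_mem _ fun i _ => ?_
    have : Finsupp.single i (x i) = (x i) • Finsupp.single i (1 : A) := by
      rw [Finsupp.smul_single', mul_one]
    rw [this]
    exact Submodule.smul_mem_smul (hx i) trivial

lemma aux_injective {A : Type*} [CommRing A] (m : Ideal A) [m.IsMaximal] {N : ℕ}
    (hmN : m ^ N = ⊥) {ι : Type*}
    (f : (ι →₀ A) →ₗ[A] (ι →₀ A))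
    (hf : ∀ z, f z ∈ (m • ⊤ : Submodule A (ι →₀ A)) → z ∈ (m • ⊤ : Submodule A (ι →₀ A)))
    {x : ι →₀ A} (hx : f x = 0) : x = 0 := by
  classical
  letI : Field (A ⧸ m) := Ideal.Quotient.field m
  have key : ∀ (n : ℕ) (x : ι →₀ A), f x = 0 → ∀ i, x i ∈ m ^ n := by
    intro n
    induction n with
    | zero => intro x _ i; simp
    | succ n ih =>
      intro x hx i₀
      have hxn : ∀ j, x j ∈ m ^ n := ih x hx
      by_cases hi₀ : x i₀ = 0
      · rw [hi₀]; exact Submodule.zero_mem _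
      have hi₀s : i₀ ∈ x.support := Finsupp.mem_support_iff.mpr hi₀
      -- the graded piece W
      set W := (↥(m ^ n)) ⧸ (m • ⊤ : Submodule A ↥(m ^ n)) with hW
      set w : ι → W := fun j => Submodule.Quotient.mk ⟨x j, hxn j⟩ with hw
      have claim0 : ∀ (c : A) (v : W), c • v = (Ideal.Quotient.mk m c) • v := by
        intro c v
        obtain ⟨z, rfl⟩ := Submodule.Quotient.mk_surjective _ v
        rfl
      set e : ι → (ι →₀ A) := fun j => Finsupp.single j (1 : A) with he
      -- decomposition of x
      have hxdec : ∀ (y : ι →₀ A) (S : Finset ι), y.support ⊆ S →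
          y = ∑ j ∈ S, (y j) • e j := by
        intro y S hS
        ext j
        rw [Finsupp.finset_sum_apply]
        by_cases hj : j ∈ S
        · rw [Finset.sum_eq_single j]
          · simp [he]
          · intro b _ hb
            simp [he, Finsupp.single_eq_of_ne' hb]
          · intro h; exact absurd hj h
        · have : y j = 0 := Finsupp.notMem_support_iff.mp (fun hc => hj (hS hc))
          rw [this]
          refine (Finset.sum_eq_zero fun b hb => ?_).symm
          have hbj : b ≠ j := fun hbj => hj (hbj ▸ hb)
          simp [he, Finsupp.single_eq_of_ne' hbj]
      -- coordinates relation from f x = 0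
      have factA : ∀ i, (∑ j ∈ x.support, x j * (f (e j)) i) = 0 := by
        intro i
        have : f x = ∑ j ∈ x.support, (x j) • f (e j) := by
          conv_lhs => rw [hxdec x x.support le_rfl]
          rw [map_sum]
          simp only [map_smul]
        rw [hx] at this
        have := congrArg (fun z : ι →₀ A => z i) this.symm
        simpa [Finsupp.finset_sum_apply] using this
      -- relation in W
      have factB : ∀ i, (∑ j ∈ x.support, ((f (e j)) i) • w j) = 0 := by
        intro i
        have : (∑ j ∈ x.support, ((f (e j)) i) • w j) =
            Submodule.Quotient.mk (∑ j ∈ x.support,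
              ((f (e j)) i) • (⟨x j, hxn j⟩ : ↥(m ^ n))) := by
          symm
          rw [← Submodule.mkQ_apply, map_sum]
          simp only [map_smul, Submodule.mkQ_apply]
          rfl
        rw [this]
        have hz : (∑ j ∈ x.support, ((f (e j)) i) • (⟨x j, hxn j⟩ : ↥(m ^ n))) = 0 := by
          apply Subtype.ext
          push_cast
          rw [← factA i]
          exact Finset.sum_congr rfl fun j _ => by rw [smul_eq_mul, mul_comm]
        rw [hz, Submodule.Quotient.mk_zero]
      -- each w j is killed by every dual functional
      have hw0 : w i₀ = 0 := by
        rw [← Module.forall_dual_apply_eq_zero_iff (A ⧸ m) (w i₀)]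
        intro lam
        set u : (A ⧸ m) → A := Function.surjInv Ideal.Quotient.mk_surjective with hu
        have hu' : ∀ c, Ideal.Quotient.mk m (u c) = c := fun c =>
          Function.surjInv_eq Ideal.Quotient.mk_surjective c
        set y : ι →₀ A := ∑ j ∈ x.support, Finsupp.single j (u (lam (w j))) with hy
        have hyj : ∀ j ∈ x.support, y j = u (lam (w j)) := by
          intro j hj
          rw [hy, Finsupp.finset_sum_apply, Finset.sum_eq_single j]
          · simp
          · intro b _ hb; simp [Finsupp.single_eq_of_ne' hb]
          · intro h; exact absurd hj h
        have hysupp : y.support ⊆ x.support := by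
          intro j hj
          by_contra hjx
          have : y j = 0 := by
            rw [hy, Finsupp.finset_sum_apply]
            refine Finset.sum_eq_zero fun b hb => ?_
            have hbj : b ≠ j := fun hbj => hjx (hbj ▸ hb)
            simp [Finsupp.single_eq_of_ne' hbj]
          exact Finsupp.mem_support_iff.mp hj this
        -- f y has coordinates in m
        have hfy : f y ∈ (m • ⊤ : Submodule A (ι →₀ A)) := by
          rw [aux_mem_smul_top_iff]
          intro i
          have hfydec : f y = ∑ j ∈ x.support, (y j) • f (e j) := by
            conv_lhs => rw [hxdec y x.support hysupp]
            rw [map_sum]; simp only [map_smul]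
          have hco : (f y) i = ∑ j ∈ x.support, y j * (f (e j)) i := by
            rw [hfydec]
            simp [Finsupp.finset_sum_apply]
          rw [← Ideal.Quotient.eq_zero_iff_mem, hco, map_sum]
          have : ∀ j ∈ x.support,
              Ideal.Quotient.mk m (y j * (f (e j)) i) =
                (Ideal.Quotient.mk m ((f (e j)) i)) * lam (w j) := by
            intro j hj
            rw [hyj j hj, map_mul, hu', mul_comm]
          rw [Finset.sum_congr rfl this]
          have := congrArg lam (factB i)
          rw [map_sum, map_zero] at this
          rw [← this]
          refine Finset.sum_congr rfl fun j _ => ?_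
          rw [claim0, map_smul, smul_eq_mul]
        have hym := hf y hfy
        rw [aux_mem_smul_top_iff] at hym
        have := hym i₀
        rw [hyj i₀ hi₀s] at this
        rw [← hu' (lam (w i₀))]
        exact Ideal.Quotient.eq_zero_iff_mem.mpr this
      -- translate w i₀ = 0
      rw [hw, Submodule.Quotient.mk_eq_zero, Submodule.mem_smul_top_iff] at hw0
      have : m • (m ^ n : Ideal A) = m ^ (n + 1) := by
        rw [Ideal.smul_eq_mul, ← pow_succ']
      rw [this] at hw0
      exact hw0
  have := key N x hx
  ext i
  have h := this i
  rw [hmN] at h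
  simpa using h


/-- Let `k` be a field, `A` a commutative Artinian local `k`-algebra with
maximal ideal `m`, `R` a commutative `k`-algebra, and `B = R ⊗[k] A`. If `s ∈ B` has
image under the canonical surjection `B → B/mB` which is a nonzerodivisor in `B/mB`,
then `s` is a nonzerodivisor in `B`. -/
theorem section_nonZeroDivisor_of_nonZeroDivisor_mod_maximalIdeal
    (k : Type*) [Field k]
    (A : Type*) [CommRing A] [IsArtinianRing A] [IsLocalRing A] [Algebra k A]
    (R : Type*) [CommRing R] [Algebra k R]
    (mB : Ideal (R ⊗[k] A))
    (hmB : mB = Ideal.map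
      (Algebra.TensorProduct.includeRight : A →ₐ[k] R ⊗[k] A).toRingHom
      (IsLocalRing.maximalIdeal A))
    (s : R ⊗[k] A)
    (hs : Ideal.Quotient.mk mB s ∈ nonZeroDivisors ((R ⊗[k] A) ⧸ mB)) :
    s ∈ nonZeroDivisors (R ⊗[k] A) := by
  classical
  letI : Algebra A (R ⊗[k] A) := Algebra.TensorProduct.rightAlgebra
  set m : Ideal A := IsLocalRing.maximalIdeal A with hm
  obtain ⟨N, hN⟩ : IsNilpotent m := by
    have h1 := IsArtinianRing.isNilpotent_jacobson_bot (R := A)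
    rwa [IsLocalRing.jacobson_eq_maximalIdeal ⊥ bot_ne_top] at h1
  have hmN : m ^ N = ⊥ := hN.trans rfl
  let ι := Module.Free.ChooseBasisIndex k R
  let bR : Module.Basis ι k R := Module.Free.chooseBasis k R
  let bL : Module.Basis ι A (A ⊗[k] R) := bR.baseChange A
  let e₀ := Algebra.TensorProduct.comm k A R
  have hsm : ∀ (a : A) (z : A ⊗[k] R), e₀ (a • z) = a • e₀ z := by
    intro a z
    rw [Algebra.smul_def, Algebra.smul_def, map_mul]
    congr 1
  let eA : (A ⊗[k] R) ≃ₗ[A] (R ⊗[k] A) :=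
    { toFun := e₀, invFun := e₀.symm,
      map_add' := map_add e₀, map_smul' := hsm,
      left_inv := e₀.symm_apply_apply, right_inv := e₀.apply_symm_apply }
  let bB : Module.Basis ι A (R ⊗[k] A) := bL.map eA
  let r : (R ⊗[k] A) ≃ₗ[A] (ι →₀ A) := bB.repr
  have hmem : ∀ z : R ⊗[k] A, z ∈ mB ↔ r z ∈ (m • ⊤ : Submodule A (ι →₀ A)) := by
    intro z
    have h1 : (m • ⊤ : Submodule A (R ⊗[k] A))
        = (Ideal.map (algebraMap A (R ⊗[k] A)) m).restrictScalars A :=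
      Ideal.smul_top_eq_map m
    have halg : (algebraMap A (R ⊗[k] A))
        = (Algebra.TensorProduct.includeRight : A →ₐ[k] R ⊗[k] A).toRingHom := rfl
    have h2 : z ∈ mB ↔ z ∈ (m • ⊤ : Submodule A (R ⊗[k] A)) := by
      rw [h1, hmB, halg]
      rfl
    have h3 : Submodule.map (r : (R ⊗[k] A) →ₗ[A] (ι →₀ A))
        (m • ⊤ : Submodule A (R ⊗[k] A)) = (m • ⊤ : Submodule A (ι →₀ A)) := by
      rw [Submodule.map_smul'', Submodule.map_top, LinearEquiv.range]
    rw [h2, ← h3, Submodule.mem_map]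
    constructor
    · rintro hz
      exact ⟨z, hz, rfl⟩
    · rintro ⟨y, hy, hyz⟩
      have : y = z := r.injective hyz
      rwa [← this]
  let f : (ι →₀ A) →ₗ[A] (ι →₀ A) :=
    r.toLinearMap ∘ₗ (LinearMap.mulLeft A s) ∘ₗ r.symm.toLinearMap
  have hf : ∀ z, f z ∈ (m • ⊤ : Submodule A (ι →₀ A)) →
      z ∈ (m • ⊤ : Submodule A (ι →₀ A)) := by
    intro z hz
    have hz' : s * r.symm z ∈ mB := (hmem _).mpr hz
    have hmk : Ideal.Quotient.mk mB (r.symm z) * Ideal.Quotient.mk mB s = 0 := by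
      rw [← map_mul, mul_comm, Ideal.Quotient.eq_zero_iff_mem]
      exact hz'
    have h0 : Ideal.Quotient.mk mB (r.symm z) = 0 := mem_nonZeroDivisors_iff_right.mp hs _ hmk
    have hzmB : r.symm z ∈ mB := Ideal.Quotient.eq_zero_iff_mem.mp h0
    have := (hmem _).mp hzmB
    simpa using this
  rw [mem_nonZeroDivisors_iff_right]
  intro b hb
  have hfb : f (r b) = 0 := by
    simp only [f, LinearMap.comp_apply, LinearEquiv.coe_coe, LinearEquiv.symm_apply_apply,
      LinearMap.mulLeft_apply]
    rw [mul_comm, hb, map_zero]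
  have hrb : r b = 0 := aux_injective m hmN f hf hfb
  simpa using r.injective (hrb.trans (map_zero r).symm)
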